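/- (Theorem 2.) Let I be a CFG with categories produced by Instructions 1–4 (so that every rule is right-free, left-restricted, two-handed free, or terminal) and let G be the minimalist grammar constructed from I by Instructions 5–8. Then every terminal expression generatable by I is a legal expression of G, i.e. L(I) ⊆ L(G). -/

import Mathlib

/-! ### Context-free grammars -/

/-- One-step rewriting for a set of context-free rules: replace one occurrence of a
nonterminal `A` by the right-hand side of one of its rules. -/
def CFGProduces {N T : Type} (rules : Set (N × List (N ⊕ T)))
    (u v : List (N ⊕ T)) : Prop :=
  ∃ (A : N) (α p s : List (N ⊕ T)),
    (A, α) ∈ rules ∧ u = p ++ Sum.inl A :: s ∧ v = p ++ α ++ s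

/-- The derivation relation `⇒*`: reflexive-transitive closure of one-step rewriting. -/
def CFGDerives {N T : Type} (rules : Set (N × List (N ⊕ T))) :
    List (N ⊕ T) → List (N ⊕ T) → Prop :=
  Relation.ReflTransGen (CFGProduces rules)

/-! ### Minimalist grammars (Stabler 1997) -/

/-- Syntactic features of a minimalist grammar over categories `C` and
licensee/licensor names `L`: selectors `=c`, categories `c`, licensors `+x`,
licensees `−x`. -/
inductive Feature (C L : Type) : Type where
  | sel : C → Feature C L
  | cat : C → Feature C L
  | pos : L → Feature C L
  | neg : L → Feature C L

/-- An MG item `⟨exp :: feats⟩` (lexical, `isLex = true`) or `⟨exp : feats⟩`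
(derived, `isLex = false`). -/
structure MGItem (T C L : Type) : Type where
  exp : List T
  isLex : Bool
  feats : List (Feature C L)

/-- An MG expression: a chain consisting of a head item and a list of
non-finally merged items. -/
abbrev MGExpr (T C L : Type) : Type := MGItem T C L × List (MGItem T C L)

/-- The merge operations: `MergeStep merger mergee output`. -/
inductive MergeStep {T C L : Type} :
    MGExpr T C L → MGExpr T C L → MGExpr T C L → Prop where
  | merge1 (e₁ e₂ : List T) (f : C) (t : List (Feature C L)) (b : Bool)
      (q : List (MGItem T C L)) :
      MergeStep (⟨e₁, true, Feature.sel f :: t⟩, [])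
        (⟨e₂, b, [Feature.cat f]⟩, q)
        (⟨e₁ ++ e₂, false, t⟩, q)
  | merge2 (e₁ e₂ : List T) (f : C) (t : List (Feature C L)) (b : Bool)
      (q₁ q₂ : List (MGItem T C L)) :
      MergeStep (⟨e₁, false, Feature.sel f :: t⟩, q₁)
        (⟨e₂, b, [Feature.cat f]⟩, q₂)
        (⟨e₂ ++ e₁, false, t⟩, q₁ ++ q₂)
  | merge3 (e₁ e₂ : List T) (f : C) (t₁ t₂ : List (Feature C L)) (b₁ b₂ : Bool)
      (q₁ q₂ : List (MGItem T C L)) (ht₂ : t₂ ≠ []) :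
      MergeStep (⟨e₁, b₁, Feature.sel f :: t₁⟩, q₁)
        (⟨e₂, b₂, Feature.cat f :: t₂⟩, q₂)
        (⟨e₁, false, t₁⟩, q₁ ++ ⟨e₂, false, t₂⟩ :: q₂)

/-- The move operations: `MoveStep input output`. -/
inductive MoveStep {T C L : Type} : MGExpr T C L → MGExpr T C L → Prop where
  | move1 (e₁ e₂ : List T) (f : L) (t : List (Feature C L)) (b : Bool)
      (q₁ q₂ : List (MGItem T C L)) :
      MoveStep (⟨e₁, false, Feature.pos f :: t⟩, q₁ ++ ⟨e₂, b, [Feature.neg f]⟩ :: q₂)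
        (⟨e₂ ++ e₁, false, t⟩, q₁ ++ q₂)
  | move2 (e₁ e₂ : List T) (f : L) (t t₂ : List (Feature C L)) (b : Bool)
      (q₁ q₂ : List (MGItem T C L)) (ht₂ : t₂ ≠ []) :
      MoveStep (⟨e₁, false, Feature.pos f :: t⟩, q₁ ++ ⟨e₂, b, Feature.neg f :: t₂⟩ :: q₂)
        (⟨e₁, false, t⟩, q₁ ++ ⟨e₂, false, t₂⟩ :: q₂)

/-- Derivability of an expression from a lexicon `lex` by merge and move. -/
inductive MGDeriv {T C L : Type} (lex : Set (MGItem T C L)) : MGExpr T C L → Prop where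
  | ax {i : MGItem T C L} : i ∈ lex → MGDeriv lex (i, [])
  | merge {A B F : MGExpr T C L} :
      MGDeriv lex A → MGDeriv lex B → MergeStep A B F → MGDeriv lex F
  | move {A F : MGExpr T C L} : MGDeriv lex A → MoveStep A F → MGDeriv lex F

/-- `E` is a premise of one application of a structure-building operation with
output `F` (all other premises being derivable from `lex`). -/
def StepOf {T C L : Type} (lex : Set (MGItem T C L)) (E F : MGExpr T C L) : Prop :=
  (∃ B, MGDeriv lex B ∧ MergeStep E B F) ∨
  (∃ A, MGDeriv lex A ∧ MergeStep A E F) ∨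
  MoveStep E F

/-- `F` is derived from `E` (possibly in several steps, `E` an ancestor of `F` in a
derivation tree). -/
def DerivedFrom {T C L : Type} (lex : Set (MGItem T C L)) (E F : MGExpr T C L) : Prop :=
  Relation.ReflTransGen (StepOf lex) E F

/-- `E` is part of (the construction of) a legal derivation tree: `E` is derivable
and some single item of category `CFin` can be derived from it. -/
def InLegalTree {T C L : Type} (lex : Set (MGItem T C L)) (CFin : C)
    (E : MGExpr T C L) : Prop :=
  MGDeriv lex E ∧
    ∃ (e : List T) (b : Bool), DerivedFrom lex E (⟨e, b, [Feature.cat CFin]⟩, [])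

/-- The language of the MG with lexicon `lex` and top category `CFin`:
exponents of legal expressions. -/
def MGLanguage {T C L : Type} (lex : Set (MGItem T C L)) (CFin : C) : Set (List T) :=
  {e : List T | ∃ b : Bool, MGDeriv lex (⟨e, b, [Feature.cat CFin]⟩, [])}

/-- The merge of the item `f` (merger, with chain `qf`) with the item `x` (mergee,
with chain `qx`) is part of the construction of a legal derivation tree. -/
def MergesInLegal {T C L : Type} (lex : Set (MGItem T C L)) (CFin : C)
    (f x : MGItem T C L) : Prop :=
  ∃ (qf qx : List (MGItem T C L)) (F : MGExpr T C L),
    MGDeriv lex (f, qf) ∧ MGDeriv lex (x, qx) ∧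
    MergeStep (f, qf) (x, qx) F ∧ InLegalTree lex CFin F

/-- `SelfTriggered lex E F`: `F` is a self-triggered derivation of `E`, i.e. all
merges involved are triggered by `E`'s own selectors (`E` is the iterated merger). -/
inductive SelfTriggered {T C L : Type} (lex : Set (MGItem T C L)) :
    MGExpr T C L → MGExpr T C L → Prop where
  | refl (E : MGExpr T C L) : SelfTriggered lex E E
  | merge {E A B F : MGExpr T C L} :
      SelfTriggered lex E A → MGDeriv lex B → MergeStep A B F → SelfTriggered lex E F
  | move {E A F : MGExpr T C L} :
      SelfTriggered lex E A → MoveStep A F → SelfTriggered lex E F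

/-- `AdaptedFrom lex adapters E F`: `F` is an adapted derivation of `E`, i.e. a
derivation of `E` in which every externally triggered merge is triggered by an
adapter item. -/
inductive AdaptedFrom {T C L : Type} (lex adapters : Set (MGItem T C L)) :
    MGExpr T C L → MGExpr T C L → Prop where
  | refl (E : MGExpr T C L) : AdaptedFrom lex adapters E E
  | selfMerge {E A B F : MGExpr T C L} :
      AdaptedFrom lex adapters E A → MGDeriv lex B → MergeStep A B F →
      AdaptedFrom lex adapters E F
  | adapterMerge {E B F : MGExpr T C L} {a : MGItem T C L} :
      a ∈ adapters → AdaptedFrom lex adapters E B → MergeStep (a, []) B F →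
      AdaptedFrom lex adapters E F
  | move {E A F : MGExpr T C L} :
      AdaptedFrom lex adapters E A → MoveStep A F → AdaptedFrom lex adapters E F

/-- The features of one selector-licensor block `=𝒞, +a₁, …, +aₖ`. -/
def blockFeats {C L : Type} (B : C × List L) : List (Feature C L) :=
  Feature.sel B.1 :: B.2.map Feature.pos

/-- The feature list consisting of the selector-licensor blocks `Bs`, the category
`c` and the licensees `ts`: `A₁, …, Aₙ, 𝒞, −t₁, …, −tₘ`. -/
def itemFeats {C L : Type} (Bs : List (C × List L)) (c : C) (ts : List L) :
    List (Feature C L) :=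
  (Bs.map blockFeats).flatten ++ Feature.cat c :: ts.map Feature.neg

/-! ### The input CFG (output of Instructions 1–4) and the construction
(Instructions 5–8) -/

/-- A CFG with categories as prepared by Instructions 1–4: rules with categories,
a start symbol whose rules have the top category `CFin`, a unique target category
for every nonterminal, and a classification of the nonterminals into free and
restricted ones. -/
structure PreppedCFG (N T Cat : Type) : Type where
  rules : Set (N × List (N ⊕ T))
  ruleCat : N × List (N ⊕ T) → Cat
  start : N
  CFin : Cat
  target : N → Cat
  Free : N → Prop

namespace PreppedCFG

variable {N T Cat : Type}

/-- The language of the underlying CFG. -/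
def language (P : PreppedCFG N T Cat) : Set (List T) :=
  {w : List T | CFGDerives P.rules [Sum.inl P.start] (w.map Sum.inr)}

/-- Well-formedness of the output of Instructions 1–4: the category of each rule is
the target category of its producer; the start symbol targets `CFin`; every free
nonterminal derives every word of its target category; and every rule is terminal,
right-free, left-restricted, or two-handed free. -/
def WellShaped (P : PreppedCFG N T Cat) : Prop :=
  (∀ r ∈ P.rules, P.ruleCat r = P.target r.1) ∧
  P.target P.start = P.CFin ∧
  (∀ X : N, P.Free X → ∀ r ∈ P.rules, P.target r.1 = P.target X → (X, r.2) ∈ P.rules) ∧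
  (∀ r ∈ P.rules,
    (∃ w : List T, r.2 = w.map Sum.inr) ∨
    (∃ (w : List T) (X : N), P.Free X ∧ r.2 = w.map Sum.inr ++ [Sum.inl X]) ∨
    (∃ (Y : N) (w : List T), ¬ P.Free Y ∧ r.2 = Sum.inl Y :: w.map Sum.inr) ∨
    (∃ (Y : N) (w : List T) (X : N), P.Free Y ∧ P.Free X ∧
      r.2 = Sum.inl Y :: (w.map Sum.inr ++ [Sum.inl X])))

/-- Specification of the licensee ordering `ord` used in Instruction 6: `ord α c`
lists, without repetition, exactly the restricted nonterminals `R` generating the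
CFG word `α` in category `c`. -/
def OrdSpec (P : PreppedCFG N T Cat) (ord : List (N ⊕ T) → Cat → List N) : Prop :=
  ∀ (α : List (N ⊕ T)) (c : Cat),
    (ord α c).Nodup ∧
    ∀ R : N, R ∈ ord α c ↔ (¬ P.Free R ∧ (R, α) ∈ P.rules ∧ P.target R = c)

/-- `WordItemOf P ord A α it`: `it` is the word item (Instructions 5–6) representing
the CFG word `α` of the rule `A → α`; the licensee name `a_R` of a restricted
nonterminal `R` is modelled as `R` itself. -/
inductive WordItemOf (P : PreppedCFG N T Cat) (ord : List (N ⊕ T) → Cat → List N) :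
    N → List (N ⊕ T) → MGItem T Cat N → Prop where
  | terminal (A : N) (w : List T)
      (h : (A, (w.map Sum.inr : List (N ⊕ T))) ∈ P.rules) :
      WordItemOf P ord A (w.map Sum.inr)
        ⟨w, true, Feature.cat (P.target A) ::
          (ord (w.map Sum.inr) (P.target A)).map Feature.neg⟩
  | rightFree (A : N) (w : List T) (X : N) (hX : P.Free X)
      (h : (A, w.map Sum.inr ++ [Sum.inl X]) ∈ P.rules) :
      WordItemOf P ord A (w.map Sum.inr ++ [Sum.inl X])
        ⟨w, true, Feature.sel (P.target X) :: Feature.cat (P.target A) ::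
          (ord (w.map Sum.inr ++ [Sum.inl X]) (P.target A)).map Feature.neg⟩
  | leftRestricted (A Y : N) (w : List T) (hY : ¬ P.Free Y)
      (h : (A, Sum.inl Y :: w.map Sum.inr) ∈ P.rules) :
      WordItemOf P ord A (Sum.inl Y :: w.map Sum.inr)
        ⟨w, true, Feature.sel (P.target Y) :: Feature.pos Y ::
          Feature.cat (P.target A) ::
          (ord (Sum.inl Y :: w.map Sum.inr) (P.target A)).map Feature.neg⟩
  | twoHanded (A Y X : N) (w : List T) (hY : P.Free Y) (hX : P.Free X)
      (h : (A, Sum.inl Y :: (w.map Sum.inr ++ [Sum.inl X])) ∈ P.rules) :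
      WordItemOf P ord A (Sum.inl Y :: (w.map Sum.inr ++ [Sum.inl X]))
        ⟨w, true, Feature.sel (P.target X) :: Feature.sel (P.target Y) ::
          Feature.cat (P.target A) ::
          (ord (Sum.inl Y :: (w.map Sum.inr ++ [Sum.inl X])) (P.target A)).map
            Feature.neg⟩

/-- `it` is a word item of the constructed lexicon. -/
def IsWordItem (P : PreppedCFG N T Cat) (ord : List (N ⊕ T) → Cat → List N)
    (it : MGItem T Cat N) : Prop :=
  ∃ (A : N) (α : List (N ⊕ T)), WordItemOf P ord A α it

/-- Remove adapters (Instruction 7): `⟨ε :: =𝒞, +a, 𝒞⟩` for each licensee `−a`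
appearing in some word item of category `𝒞`. -/
def IsRemoveAdapter (P : PreppedCFG N T Cat) (ord : List (N ⊕ T) → Cat → List N)
    (it : MGItem T Cat N) : Prop :=
  ∃ (c : Cat) (a : N),
    (∃ jt : MGItem T Cat N, P.IsWordItem ord jt ∧ Feature.cat c ∈ jt.feats ∧
      Feature.neg a ∈ jt.feats) ∧
    it = ⟨[], true, [Feature.sel c, Feature.pos a, Feature.cat c]⟩

/-- Select adapters (Instruction 8): `⟨ε :: =𝒞, +x, +t, 𝒞, −x⟩` for each licensee
`−x` and each nonempty sequence `−t` of licensees appearing behind `−x` in the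
feature list of some word item of category `𝒞`. -/
def IsSelectAdapter (P : PreppedCFG N T Cat) (ord : List (N ⊕ T) → Cat → List N)
    (it : MGItem T Cat N) : Prop :=
  ∃ (c : Cat) (x : N) (t : List N), t ≠ [] ∧
    (∃ jt : MGItem T Cat N, P.IsWordItem ord jt ∧ Feature.cat c ∈ jt.feats ∧
      (Feature.neg x :: t.map Feature.neg) <:+ jt.feats) ∧
    it = ⟨[], true, Feature.sel c :: Feature.pos x :: t.map Feature.pos ++
      [Feature.cat c, Feature.neg x]⟩

/-- `it` is an adapter item. -/
def IsAdapter (P : PreppedCFG N T Cat) (ord : List (N ⊕ T) → Cat → List N)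
    (it : MGItem T Cat N) : Prop :=
  P.IsRemoveAdapter ord it ∨ P.IsSelectAdapter ord it

/-- The lexicon of the MG constructed by Instructions 5–8. -/
def MGLex (P : PreppedCFG N T Cat) (ord : List (N ⊕ T) → Cat → List N) :
    Set (MGItem T Cat N) :=
  {it | P.IsWordItem ord it ∨ P.IsAdapter ord it}

/-- Recursion-free: no nonterminal `A` admits a nonempty derivation `A ⇒⁺ ω`
with `A` occurring in `ω`. -/
def RecFree (P : PreppedCFG N T Cat) : Prop :=
  ∀ (A : N) (ω : List (N ⊕ T)),
    Relation.TransGen (CFGProduces P.rules) [Sum.inl A] ω → Sum.inl A ∉ ω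

/-- Category-recursion free: recursion-free and for every rule `A → α # 𝒞` and every
derivation `α ⇒* ω`, the string `ω` contains no nonterminal that is the left-hand
side of a rule of category `𝒞`. -/
def CatRecFree (P : PreppedCFG N T Cat) : Prop :=
  P.RecFree ∧
  ∀ r ∈ P.rules, ∀ ω : List (N ⊕ T), CFGDerives P.rules r.2 ω →
    ∀ B : N, Sum.inl B ∈ ω → ∀ r' ∈ P.rules, r'.1 = B → P.ruleCat r' ≠ P.ruleCat r

end PreppedCFG

namespace Stmt6Aux

variable {N T Cat : Type}

/-- `n`-step CFG derivation. -/
inductive DerN (rules : Set (N × List (N ⊕ T))) : ℕ → List (N ⊕ T) → List (N ⊕ T) → Prop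
  | refl (u : List (N ⊕ T)) : DerN rules 0 u u
  | head {u v w : List (N ⊕ T)} {n : ℕ} :
      CFGProduces rules u v → DerN rules n v w → DerN rules (n + 1) u w

theorem DerN.tail {rules : Set (N × List (N ⊕ T))} {n : ℕ} {u v w : List (N ⊕ T)}
    (h : DerN rules n u v) (hs : CFGProduces rules v w) : DerN rules (n + 1) u w := by
  induction h with
  | refl u => exact DerN.head hs (DerN.refl _)
  | head h1 _ ih => exact DerN.head h1 (ih hs)

theorem derN_of_derives {rules : Set (N × List (N ⊕ T))} {u v : List (N ⊕ T)}
    (h : CFGDerives rules u v) : ∃ n, DerN rules n u v := by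
  induction h with
  | refl => exact ⟨0, DerN.refl _⟩
  | tail _ hs ih => obtain ⟨n, hn⟩ := ih; exact ⟨n + 1, hn.tail hs⟩

/-- One-step splitting. -/
theorem produces_append {rules : Set (N × List (N ⊕ T))} {α β v : List (N ⊕ T)}
    (h : CFGProduces rules (α ++ β) v) :
    (∃ α', CFGProduces rules α α' ∧ v = α' ++ β) ∨
    (∃ β', CFGProduces rules β β' ∧ v = α ++ β') := by
  obtain ⟨A, γ, p, s, hr, hu, hv⟩ := h
  rcases List.append_eq_append_iff.mp hu with ⟨a', hp, hb⟩ | ⟨c', ha, hs⟩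
  · refine Or.inr ⟨a' ++ γ ++ s, ⟨A, γ, a', s, hr, hb, rfl⟩, ?_⟩
    subst hv hp; simp
  · cases c' with
    | nil =>
      refine Or.inr ⟨γ ++ s, ⟨A, γ, [], s, hr, (by simpa using hs.symm), rfl⟩, ?_⟩
      subst hv; simp at ha; subst ha; simp
    | cons x c'' =>
      obtain ⟨hx, hs'⟩ := List.cons.injEq .. ▸ hs
      refine Or.inl ⟨p ++ γ ++ c'', ⟨A, γ, p, c'', hr, by rw [ha, ← hx], rfl⟩, ?_⟩
      subst hv; rw [hs']; simp

theorem DerN.split {rules : Set (N × List (N ⊕ T))} {n : ℕ} {α β γ : List (N ⊕ T)}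
    (h : DerN rules n (α ++ β) γ) :
    ∃ γ₁ γ₂ n₁ n₂, γ = γ₁ ++ γ₂ ∧ n₁ ≤ n ∧ n₂ ≤ n ∧
      DerN rules n₁ α γ₁ ∧ DerN rules n₂ β γ₂ := by
  induction n generalizing α β with
  | zero =>
    cases h
    exact ⟨α, β, 0, 0, rfl, le_refl _, le_refl _, DerN.refl _, DerN.refl _⟩
  | succ n ih =>
    cases h with
    | head h1 h2 =>
      rcases produces_append h1 with ⟨α', hα, rfl⟩ | ⟨β', hβ, rfl⟩
      · obtain ⟨γ₁, γ₂, n₁, n₂, rfl, hn₁, hn₂, d₁, d₂⟩ := ih h2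
        exact ⟨γ₁, γ₂, n₁ + 1, n₂, rfl, by omega, by omega, DerN.head hα d₁, d₂⟩
      · obtain ⟨γ₁, γ₂, n₁, n₂, rfl, hn₁, hn₂, d₁, d₂⟩ := ih h2
        exact ⟨γ₁, γ₂, n₁, n₂ + 1, rfl, by omega, by omega, d₁, DerN.head hβ d₂⟩

theorem DerN.terminal_fixed {rules : Set (N × List (N ⊕ T))} {n : ℕ} {v : List T}
    {γ : List (N ⊕ T)} (h : DerN rules n (v.map Sum.inr) γ) : γ = v.map Sum.inr := by
  cases h with
  | refl => rfl
  | head h1 h2 =>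
    obtain ⟨A, γ', p, s, _, hu, _⟩ := h1
    have : (Sum.inl A : N ⊕ T) ∈ v.map Sum.inr := by rw [hu]; simp
    simp at this

theorem DerN.single_inl {rules : Set (N × List (N ⊕ T))} {n : ℕ} {A : N}
    {γ : List (N ⊕ T)} (h : DerN rules n [Sum.inl A] γ) :
    γ = [Sum.inl A] ∨ ∃ α m, (A, α) ∈ rules ∧ m < n ∧ DerN rules m α γ := by
  cases h with
  | refl => exact Or.inl rfl
  | @head _ v _ m h1 h2 =>
    obtain ⟨A', α, p, s, hr, hu, hv⟩ := h1
    have hp : p = [] ∧ (Sum.inl A' : N ⊕ T) = Sum.inl A ∧ s = ([] : List (N ⊕ T)) := by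
      cases p with
      | nil => simpa using hu.symm
      | cons x q => simp at hu
    obtain ⟨rfl, hA, rfl⟩ := hp
    obtain rfl : A' = A := by simpa using hA
    refine Or.inr ⟨α, m, hr, Nat.lt_succ_self _, ?_⟩
    have : v = α := by simpa using hv
    exact this ▸ h2

/-- The remove adapter item. -/
def remIt (T : Type) {Cat N : Type} (c : Cat) (a : N) : MGItem T Cat N :=
  ⟨[], true, [Feature.sel c, Feature.pos a, Feature.cat c]⟩

/-- The select adapter item. -/
def selIt (T : Type) {Cat N : Type} (c : Cat) (x : N) (t : List N) : MGItem T Cat N :=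
  ⟨[], true, Feature.sel c :: Feature.pos x :: t.map Feature.pos ++
    [Feature.cat c, Feature.neg x]⟩

section Wrappers

variable {T C L : Type} {lex : Set (MGItem T C L)}

theorem merge1' {e₁ e₂ : List T} {f : C} {t : List (Feature C L)} {b : Bool}
    {q : List (MGItem T C L)}
    (h₁ : (⟨e₁, true, Feature.sel f :: t⟩ : MGItem T C L) ∈ lex)
    (h₂ : MGDeriv lex (⟨e₂, b, [Feature.cat f]⟩, q)) :
    MGDeriv lex (⟨e₁ ++ e₂, false, t⟩, q) :=
  MGDeriv.merge (MGDeriv.ax h₁) h₂ (MergeStep.merge1 e₁ e₂ f t b q)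

theorem merge2' {e₁ e₂ : List T} {f : C} {t : List (Feature C L)} {b : Bool}
    (h₁ : MGDeriv lex (⟨e₁, false, Feature.sel f :: t⟩, []))
    (h₂ : MGDeriv lex (⟨e₂, b, [Feature.cat f]⟩, [])) :
    MGDeriv lex (⟨e₂ ++ e₁, false, t⟩, []) :=
  MGDeriv.merge h₁ h₂ (MergeStep.merge2 e₁ e₂ f t b [] [])

theorem merge3' {e₁ e₂ : List T} {f : C} {t₁ t₂ : List (Feature C L)} {b₂ : Bool}
    (h₁ : (⟨e₁, true, Feature.sel f :: t₁⟩ : MGItem T C L) ∈ lex)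
    (h₂ : MGDeriv lex (⟨e₂, b₂, Feature.cat f :: t₂⟩, []))
    (ht₂ : t₂ ≠ []) :
    MGDeriv lex (⟨e₁, false, t₁⟩, [⟨e₂, false, t₂⟩]) :=
  MGDeriv.merge (MGDeriv.ax h₁) h₂ (MergeStep.merge3 e₁ e₂ f t₁ t₂ true b₂ [] [] ht₂)

theorem move1' {e₁ e₂ : List T} {f : L} {t : List (Feature C L)} {b : Bool}
    (h : MGDeriv lex (⟨e₁, false, Feature.pos f :: t⟩, [⟨e₂, b, [Feature.neg f]⟩])) :
    MGDeriv lex (⟨e₂ ++ e₁, false, t⟩, []) :=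
  MGDeriv.move h (MoveStep.move1 e₁ e₂ f t b [] [])

theorem move2' {e₁ e₂ : List T} {f : L} {t t₂ : List (Feature C L)} {b : Bool}
    (h : MGDeriv lex (⟨e₁, false, Feature.pos f :: t⟩, [⟨e₂, b, Feature.neg f :: t₂⟩]))
    (ht₂ : t₂ ≠ []) :
    MGDeriv lex (⟨e₁, false, t⟩, [⟨e₂, false, t₂⟩]) :=
  MGDeriv.move h (MoveStep.move2 e₁ e₂ f t t₂ b [] [] ht₂)

end Wrappers

section Strip

variable {N T Cat : Type} {lex : Set (MGItem T Cat N)} {c : Cat}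

theorem selLoop :
    ∀ (t : List N), t ≠ [] → ∀ (K : List (Feature Cat N)) (e u : List T) (b₂ : Bool),
    MGDeriv lex (⟨e, false, t.map Feature.pos ++ K⟩, [⟨u, b₂, t.map Feature.neg⟩]) →
    MGDeriv lex (⟨u ++ e, false, K⟩, []) := by
  intro t
  induction t with
  | nil => simp
  | cons a rest ih =>
    intro _ K e u b₂ h
    have h' : MGDeriv lex (⟨e, false, Feature.pos a :: (rest.map Feature.pos ++ K)⟩,
        [⟨u, b₂, Feature.neg a :: rest.map Feature.neg⟩]) := h
    cases rest with
    | nil => exact move1' h'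
    | cons r rs =>
      exact ih (by simp) K e u false (move2' h' (by simp))

theorem stripS1toS1 :
    ∀ (pre rem : List N), rem ≠ [] →
    (∀ a ∈ pre, remIt T c a ∈ lex) →
    ∀ u : List T,
    MGDeriv lex (⟨[], false, [Feature.cat c]⟩, [⟨u, false, (pre ++ rem).map Feature.neg⟩]) →
    MGDeriv lex (⟨[], false, [Feature.cat c]⟩, [⟨u, false, rem.map Feature.neg⟩]) := by
  intro pre
  induction pre with
  | nil => intro rem _ _ u h; exact h
  | cons p ps ih =>
    intro rem hrem hadp u h
    have h1 : MGDeriv lex (⟨[], false, Feature.pos p :: [Feature.cat c]⟩,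
        [⟨u, false, Feature.neg p :: (ps ++ rem).map Feature.neg⟩]) :=
      merge1' (hadp p (by simp)) h
    exact ih rem hrem (fun a ha => hadp a (by simp [ha])) u
      (move2' h1 (by simp [hrem]))

theorem stripS1 :
    ∀ (rem : List N), rem ≠ [] → (∀ a ∈ rem, remIt T c a ∈ lex) →
    ∀ (b b₂ : Bool) (u : List T),
    MGDeriv lex (⟨[], b, [Feature.cat c]⟩, [⟨u, b₂, rem.map Feature.neg⟩]) →
    MGDeriv lex (⟨u, false, [Feature.cat c]⟩, []) := by
  intro rem
  induction rem with
  | nil => simp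
  | cons a rest ih =>
    intro _ hadp b b₂ u h
    have h1 : MGDeriv lex (⟨[], false, Feature.pos a :: [Feature.cat c]⟩,
        [⟨u, b₂, Feature.neg a :: rest.map Feature.neg⟩]) :=
      merge1' (hadp a (by simp)) h
    cases rest with
    | nil => simpa using move1' h1
    | cons r rs =>
      exact ih (by simp) (fun x hx => hadp x (by simp [hx])) false false u
        (move2' h1 (by simp))

theorem stripS0 :
    ∀ (L : List N) (u : List T) (b : Bool), (∀ a ∈ L, remIt T c a ∈ lex) →
    MGDeriv lex (⟨u, b, Feature.cat c :: L.map Feature.neg⟩, []) →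
    ∃ b', MGDeriv lex (⟨u, b', [Feature.cat c]⟩, []) := by
  intro L u b hadp h
  cases L with
  | nil => exact ⟨b, h⟩
  | cons a rest =>
    have h1 : MGDeriv lex (⟨[], false, Feature.pos a :: [Feature.cat c]⟩,
        [⟨u, false, Feature.neg a :: rest.map Feature.neg⟩]) :=
      merge3' (hadp a (by simp)) h (by simp)
    cases rest with
    | nil => exact ⟨false, by simpa using move1' h1⟩
    | cons r rs =>
      exact ⟨false, stripS1 (r :: rs) (by simp)
        (fun x hx => hadp x (by simp [hx])) false false u (move2' h1 (by simp))⟩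

theorem stripS0toS1 :
    ∀ (p : N) (ps rem : List N), rem ≠ [] →
    (∀ a ∈ p :: ps, remIt T c a ∈ lex) →
    ∀ (u : List T) (b : Bool),
    MGDeriv lex (⟨u, b, Feature.cat c :: ((p :: ps) ++ rem).map Feature.neg⟩, []) →
    MGDeriv lex (⟨[], false, [Feature.cat c]⟩, [⟨u, false, rem.map Feature.neg⟩]) := by
  intro p ps rem hrem hadp u b h
  have h1 : MGDeriv lex (⟨[], false, Feature.pos p :: [Feature.cat c]⟩,
      [⟨u, false, Feature.neg p :: (ps ++ rem).map Feature.neg⟩]) :=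
    merge3' (hadp p (by simp)) h (by simp)
  exact stripS1toS1 ps rem hrem (fun a ha => hadp a (by simp [ha])) u
    (move2' h1 (by simp [hrem]))

theorem selS0 {x : N} {t : List N}
    (ht : t ≠ []) (hadp : selIt T c x t ∈ lex) {u : List T} {b : Bool}
    (h : MGDeriv lex (⟨u, b, Feature.cat c :: (Feature.neg x :: t.map Feature.neg)⟩, [])) :
    MGDeriv lex (⟨u, false, [Feature.cat c, Feature.neg x]⟩, []) := by
  have hadp' : (⟨[], true, Feature.sel c ::
      (Feature.pos x :: (t.map Feature.pos ++ [Feature.cat c, Feature.neg x]))⟩ :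
      MGItem T Cat N) ∈ lex := hadp
  have h1 : MGDeriv lex (⟨[], false,
      Feature.pos x :: (t.map Feature.pos ++ [Feature.cat c, Feature.neg x])⟩,
      [⟨u, false, Feature.neg x :: t.map Feature.neg⟩]) :=
    merge3' hadp' h (by simp)
  have h2 := move2' h1 (by simpa using ht)
  simpa using selLoop t ht [Feature.cat c, Feature.neg x] [] u false h2


theorem selS1 {x : N} {t : List N}
    (ht : t ≠ []) (hadp : selIt T c x t ∈ lex) {u : List T} {b b₂ : Bool}
    (h : MGDeriv lex (⟨[], b, [Feature.cat c]⟩,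
      [⟨u, b₂, Feature.neg x :: t.map Feature.neg⟩])) :
    MGDeriv lex (⟨u, false, [Feature.cat c, Feature.neg x]⟩, []) := by
  have hadp' : (⟨[], true, Feature.sel c ::
      (Feature.pos x :: (t.map Feature.pos ++ [Feature.cat c, Feature.neg x]))⟩ :
      MGItem T Cat N) ∈ lex := hadp
  have h1 : MGDeriv lex (⟨[], false,
      Feature.pos x :: (t.map Feature.pos ++ [Feature.cat c, Feature.neg x])⟩,
      [⟨u, b₂, Feature.neg x :: t.map Feature.neg⟩]) := by
    simpa using merge1' hadp' h
  have h2 := move2' h1 (by simpa using ht)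
  simpa using selLoop t ht [Feature.cat c, Feature.neg x] [] u false h2

end Strip

section Mem

variable {N T Cat : Type}

theorem wordIt_mem (P : PreppedCFG N T Cat) (ord : List (N ⊕ T) → Cat → List N)
    {A : N} {α : List (N ⊕ T)} {it : MGItem T Cat N}
    (h : PreppedCFG.WordItemOf P ord A α it) : it ∈ P.MGLex ord :=
  Or.inl ⟨A, α, h⟩

theorem remIt_mem (P : PreppedCFG N T Cat) (ord : List (N ⊕ T) → Cat → List N)
    {jt : MGItem T Cat N} (hjt : P.IsWordItem ord jt)
    {F₀ : List (Feature Cat N)} {c : Cat} {L : List N}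
    (hf : jt.feats = F₀ ++ Feature.cat c :: L.map Feature.neg)
    {a : N} (ha : a ∈ L) : remIt T c a ∈ P.MGLex ord := by
  refine Or.inr (Or.inl ⟨c, a, ⟨jt, hjt, ?_, ?_⟩, rfl⟩)
  · rw [hf]; exact List.mem_append_right _ (List.mem_cons_self)
  · rw [hf]
    exact List.mem_append_right _ (List.mem_cons_of_mem _ (List.mem_map_of_mem ha))

theorem selIt_mem (P : PreppedCFG N T Cat) (ord : List (N ⊕ T) → Cat → List N)
    {jt : MGItem T Cat N} (hjt : P.IsWordItem ord jt)
    {F₀ : List (Feature Cat N)} {c : Cat} {pre post : List N} {x : N}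
    (hf : jt.feats = F₀ ++ Feature.cat c :: (pre ++ x :: post).map Feature.neg)
    (hpost : post ≠ []) : selIt T c x post ∈ P.MGLex ord := by
  refine Or.inr (Or.inr ⟨c, x, post, hpost, ⟨jt, hjt, ?_, ?_⟩, rfl⟩)
  · rw [hf]; exact List.mem_append_right _ (List.mem_cons_self)
  · exact ⟨F₀ ++ Feature.cat c :: pre.map Feature.neg, by rw [hf]; simp⟩

end Mem

section Finish

variable {N T Cat : Type}

/-- The two usable shapes of a derived expression for a restricted nonterminal. -/
def RGood {N T Cat : Type} (lex : Set (MGItem T Cat N)) (c : Cat) (Y : N) (u : List T) : Prop :=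
  (∃ b, MGDeriv lex (⟨u, b, [Feature.cat c, Feature.neg Y]⟩, [])) ∨
  MGDeriv lex (⟨[], false, [Feature.cat c]⟩, [⟨u, false, [Feature.neg Y]⟩])

theorem finish (P : PreppedCFG N T Cat) (ord : List (N ⊕ T) → Cat → List N)
    (hOrd : P.OrdSpec ord) {A : N} {α : List (N ⊕ T)} {jt : MGItem T Cat N}
    (hjt : PreppedCFG.WordItemOf P ord A α jt) {F₀ : List (Feature Cat N)}
    (hf : jt.feats = F₀ ++ Feature.cat (P.target A) ::
      (ord α (P.target A)).map Feature.neg)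
    (hrule : (A, α) ∈ P.rules) {w : List T} {b₀ : Bool}
    (hS0 : MGDeriv (P.MGLex ord) (⟨w, b₀, Feature.cat (P.target A) ::
      (ord α (P.target A)).map Feature.neg⟩, [])) :
    (∃ b, MGDeriv (P.MGLex ord) (⟨w, b, [Feature.cat (P.target A)]⟩, [])) ∧
    (¬ P.Free A → RGood (P.MGLex ord) (P.target A) A w) := by
  set c := P.target A with hc
  set L := ord α c with hL
  have hjt' : P.IsWordItem ord jt := ⟨A, α, hjt⟩
  have hadp : ∀ a ∈ L, remIt T c a ∈ P.MGLex ord :=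
    fun a ha => remIt_mem P ord hjt' hf ha
  constructor
  · exact stripS0 L w b₀ hadp hS0
  · intro hnf
    have hA : A ∈ L := ((hOrd α c).2 A).mpr ⟨hnf, hrule, rfl⟩
    obtain ⟨pre, post, hLsplit⟩ := List.append_of_mem hA
    rw [hLsplit] at hS0 hf
    cases pre with
    | nil =>
      cases post with
      | nil => exact Or.inl ⟨b₀, hS0⟩
      | cons q qs =>
        exact Or.inl ⟨false, selS0 (by simp) (selIt_mem P ord hjt' hf (by simp)) hS0⟩
    | cons p ps =>
      have hadp' : ∀ a ∈ p :: ps, remIt T c a ∈ P.MGLex ord := by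
        intro a ha
        exact hadp a (by rw [hLsplit]; exact List.mem_append_left _ ha)
      have h1 := stripS0toS1 p ps (A :: post) (by simp) hadp' w b₀ hS0
      cases post with
      | nil => exact Or.inr h1
      | cons q qs =>
        exact Or.inl ⟨false, selS1 (by simp) (selIt_mem P ord hjt' hf (by simp)) h1⟩

end Finish

section Main

variable {N T Cat : Type}

theorem map_inr_split {w : List T} {γ₁ γ₂ : List (N ⊕ T)}
    (h : w.map Sum.inr = γ₁ ++ γ₂) :
    ∃ u₁ u₂, w = u₁ ++ u₂ ∧ γ₁ = u₁.map Sum.inr ∧ γ₂ = u₂.map Sum.inr := by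
  obtain ⟨l₁, l₂, hw, h1, h2⟩ := List.map_eq_append_iff.mp h
  exact ⟨l₁, l₂, hw, h1.symm, h2.symm⟩

theorem map_inr_inj {u v : List T}
    (h : (u.map Sum.inr : List (N ⊕ T)) = v.map Sum.inr) : u = v :=
  List.map_injective_iff.mpr Sum.inr_injective h

theorem mainN (P : PreppedCFG N T Cat) (ord : List (N ⊕ T) → Cat → List N)
    (hWS : P.WellShaped) (hOrd : P.OrdSpec ord) :
    ∀ (n : ℕ) (A : N) (w : List T), DerN P.rules n [Sum.inl A] (w.map Sum.inr) →
    (∃ b, MGDeriv (P.MGLex ord) (⟨w, b, [Feature.cat (P.target A)]⟩, [])) ∧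
    (¬ P.Free A → RGood (P.MGLex ord) (P.target A) A w) := by
  intro n
  induction n using Nat.strong_induction_on with
  | _ n ih =>
    intro A w hder
    rcases hder.single_inl with heq | ⟨α, m, hr, hmn, hd⟩
    · exfalso
      have : (Sum.inl A : N ⊕ T) ∈ w.map Sum.inr := by rw [heq]; simp
      simp at this
    · rcases hWS.2.2.2 (A, α) hr with ⟨v, hα⟩ | ⟨v, X, hXf, hα⟩ |
        ⟨Y, v, hYr, hα⟩ | ⟨Y, v, X, hYf, hXf, hα⟩
      -- terminal rule
      · have hα' : α = v.map Sum.inr := hα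
        subst hα'
        have hwv : w = v := map_inr_inj hd.terminal_fixed
        subst hwv
        exact finish P ord hOrd (PreppedCFG.WordItemOf.terminal A w hr) (F₀ := []) rfl hr
          (MGDeriv.ax (wordIt_mem P ord (PreppedCFG.WordItemOf.terminal A w hr)))
      -- right-free rule
      · have hα' : α = v.map Sum.inr ++ [Sum.inl X] := hα
        subst hα'
        obtain ⟨γ₁, γ₂, n₁, n₂, hγ, hn₁, hn₂, d₁, d₂⟩ := hd.split
        have hγ₁ : γ₁ = v.map Sum.inr := d₁.terminal_fixed
        subst hγ₁
        obtain ⟨u₁, u₂, hw, h1, h2⟩ := map_inr_split hγ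
        obtain rfl : v = u₁ := map_inr_inj h1
        subst hw
        rw [h2] at d₂
        obtain ⟨bX, hX⟩ := (ih n₂ (lt_of_le_of_lt hn₂ hmn) X u₂ d₂).1
        have hS0 : MGDeriv (P.MGLex ord) (⟨v ++ u₂, false,
            Feature.cat (P.target A) ::
            (ord (v.map Sum.inr ++ [Sum.inl X]) (P.target A)).map Feature.neg⟩, []) :=
          merge1' (wordIt_mem P ord (PreppedCFG.WordItemOf.rightFree A v X hXf hr)) hX
        exact finish P ord hOrd (PreppedCFG.WordItemOf.rightFree A v X hXf hr) (F₀ := [Feature.sel (P.target X)]) rfl hr hS0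
      -- left-restricted rule
      · have hα' : α = Sum.inl Y :: v.map Sum.inr := hα
        subst hα'
        have hd' : DerN P.rules m ([Sum.inl Y] ++ v.map Sum.inr) (w.map Sum.inr) := hd
        obtain ⟨γ₁, γ₂, n₁, n₂, hγ, hn₁, hn₂, d₁, d₂⟩ := hd'.split
        have hγ₂ : γ₂ = v.map Sum.inr := d₂.terminal_fixed
        subst hγ₂
        obtain ⟨u₁, u₂, hw, h1, h2⟩ := map_inr_split hγ
        obtain rfl : v = u₂ := map_inr_inj h2
        subst hw
        rw [h1] at d₁
        have hRG := (ih n₁ (lt_of_le_of_lt hn₁ hmn) Y u₁ d₁).2 hYr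
        have hmem := wordIt_mem P ord (PreppedCFG.WordItemOf.leftRestricted A Y v hYr hr)
        have hS0 : MGDeriv (P.MGLex ord) (⟨u₁ ++ v, false,
            Feature.cat (P.target A) ::
            (ord (Sum.inl Y :: v.map Sum.inr) (P.target A)).map Feature.neg⟩, []) := by
          rcases hRG with ⟨bY, hY⟩ | hY
          · exact move1' (merge3' hmem hY (by simp))
          · simpa using move1' (merge1' hmem hY)
        exact finish P ord hOrd (PreppedCFG.WordItemOf.leftRestricted A Y v hYr hr)
          (F₀ := [Feature.sel (P.target Y), Feature.pos Y]) rfl hr hS0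
      -- two-handed free rule
      · have hα' : α = Sum.inl Y :: (v.map Sum.inr ++ [Sum.inl X]) := hα
        subst hα'
        have hd' : DerN P.rules m ([Sum.inl Y] ++ (v.map Sum.inr ++ [Sum.inl X]))
            (w.map Sum.inr) := hd
        obtain ⟨γ₁, γδ, n₁, n₂, hγ, hn₁, hn₂, d₁, d₂⟩ := hd'.split
        obtain ⟨γ₂₁, γ₂₂, n₂₁, n₂₂, hγδ, hn₂₁, hn₂₂, d₂₁, d₂₂⟩ := d₂.split
        have hγ₂₁ : γ₂₁ = v.map Sum.inr := d₂₁.terminal_fixed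
        subst hγ₂₁; subst hγδ
        obtain ⟨uY, rest, hw, h1, h2⟩ := map_inr_split hγ
        obtain ⟨v', uX, hrest, hv', h3⟩ := map_inr_split h2.symm
        obtain rfl : v = v' := map_inr_inj hv'
        subst hrest; subst hw
        rw [h1] at d₁
        rw [h3] at d₂₂
        obtain ⟨bY, hYd⟩ := (ih n₁ (lt_of_le_of_lt hn₁ hmn) Y uY d₁).1
        obtain ⟨bX, hXd⟩ :=
          (ih n₂₂ (lt_of_le_of_lt (hn₂₂.trans hn₂) hmn) X uX d₂₂).1
        have hmem := wordIt_mem P ord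
          (PreppedCFG.WordItemOf.twoHanded A Y X v hYf hXf hr)
        have hstep : MGDeriv (P.MGLex ord) (⟨v ++ uX, false,
            Feature.sel (P.target Y) :: Feature.cat (P.target A) ::
            (ord (Sum.inl Y :: (v.map Sum.inr ++ [Sum.inl X])) (P.target A)).map
              Feature.neg⟩, []) :=
          merge1' hmem hXd
        have hS0 : MGDeriv (P.MGLex ord) (⟨uY ++ (v ++ uX), false,
            Feature.cat (P.target A) ::
            (ord (Sum.inl Y :: (v.map Sum.inr ++ [Sum.inl X])) (P.target A)).map
              Feature.neg⟩, []) :=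
          merge2' hstep hYd
        exact finish P ord hOrd (PreppedCFG.WordItemOf.twoHanded A Y X v hYf hXf hr)
          (F₀ := [Feature.sel (P.target X), Feature.sel (P.target Y)]) rfl hr hS0

end Main
end Stmt6Aux

/-- Theorem 2: every terminal expression generatable by the prepared
CFG with categories `I` (= `P`) is a legal expression of the MG constructed by
Instructions 5–8: `L(I) ⊆ L(G)`. -/
theorem stmt6 {N T Cat : Type} (P : PreppedCFG N T Cat)
    (ord : List (N ⊕ T) → Cat → List N)
    (hWS : P.WellShaped) (hOrd : P.OrdSpec ord) :
    P.language ⊆ MGLanguage (P.MGLex ord) P.CFin := by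
  intro w hw
  have hw' : CFGDerives P.rules [Sum.inl P.start] (w.map Sum.inr) := hw
  obtain ⟨n, hn⟩ := Stmt6Aux.derN_of_derives hw'
  obtain ⟨b, hb⟩ := (Stmt6Aux.mainN P ord hWS hOrd n P.start w hn).1
  rw [hWS.2.1] at hb
  exact ⟨b, hb⟩
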